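/- Under the Kaluza-Klein hypotheses with the standard Vielbein choice, the fiber-direction spin connection components vanish: [A_2]^a_2 = 0 for a ∈ {0,1}, where [A_μ]^A_B := E^A_ν Ẽ^λ_B Γ^ν_{μλ} − Ẽ^λ_B ∂_μ E^A_λ. -/

import Mathlib

open Matrix

/-- Partial derivative in coordinate direction `μ` on ℝ³. -/
noncomputable def pd (μ : Fin 3) (F : (Fin 3 → ℝ) → ℝ) (x : Fin 3 → ℝ) : ℝ :=
  fderiv ℝ F x (Pi.single μ 1)

/-- The Kaluza-Klein metric `G` with `G_{αβ} = h_{αβ} + ε φ_α φ_β`,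
`G_{α2} = G_{2α} = ε φ_α`, `G_{22} = ε`. -/
noncomputable def KK (ε : ℝ) (h : Matrix (Fin 2) (Fin 2) ℝ) (φ : Fin 2 → ℝ) :
    Matrix (Fin 3) (Fin 3) ℝ :=
  Matrix.of fun μ ν =>
    if hμ : (μ : ℕ) < 2 then
      if hν : (ν : ℕ) < 2 then h ⟨(μ : ℕ), hμ⟩ ⟨(ν : ℕ), hν⟩ + ε * φ ⟨(μ : ℕ), hμ⟩ * φ ⟨(ν : ℕ), hν⟩
      else ε * φ ⟨(μ : ℕ), hμ⟩
    else if hν : (ν : ℕ) < 2 then ε * φ ⟨(ν : ℕ), hν⟩ else ε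

/-- Christoffel symbols `Γ^λ_{μν} = (1/2) G^{λρ}(∂_ν G_{ρμ} + ∂_μ G_{ρν} − ∂_ρ G_{μν})`. -/
noncomputable def chris (G : (Fin 3 → ℝ) → Matrix (Fin 3) (Fin 3) ℝ)
    (x : Fin 3 → ℝ) (l μ ν : Fin 3) : ℝ :=
  (1/2) * ∑ ρ, (G x)⁻¹ l ρ *
    (pd ν (fun y => G y ρ μ) x + pd μ (fun y => G y ρ ν) x - pd ρ (fun y => G y μ ν) x)

/-- Abelian field strength `f_{αβ} = ∂_α φ_β − ∂_β φ_α` (base indices). -/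
noncomputable def fs (φf : (Fin 3 → ℝ) → Fin 2 → ℝ) (x : Fin 3 → ℝ) (α β : Fin 2) : ℝ :=
  pd α.castSucc (fun y => φf y β) x - pd β.castSucc (fun y => φf y α) x

/-- Christoffel symbols `γ^δ_{αβ}` of the base metric `h`. -/
noncomputable def gam (hm : (Fin 3 → ℝ) → Matrix (Fin 2) (Fin 2) ℝ)
    (x : Fin 3 → ℝ) (δ α β : Fin 2) : ℝ :=
  (1/2) * ∑ ζ, (hm x)⁻¹ δ ζ *
    (pd β.castSucc (fun y => hm y ζ α) x + pd α.castSucc (fun y => hm y ζ β) x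
      - pd ζ.castSucc (fun y => hm y α β) x)


/-- The Vielbein `E^A_μ` (row index A, column index μ):
`E^a_α = e^a_α`, `E^2_2 = √ε`, `E^2_α = √ε φ_α`, `E^a_2 = 0`. -/
noncomputable def Emat (ε : ℝ) (e : Matrix (Fin 2) (Fin 2) ℝ) (φ : Fin 2 → ℝ) :
    Matrix (Fin 3) (Fin 3) ℝ :=
  !![e 0 0, e 0 1, 0;
     e 1 0, e 1 1, 0;
     Real.sqrt ε * φ 0, Real.sqrt ε * φ 1, Real.sqrt ε]

/-- The inverse Vielbein `Ẽ^μ_A` (row index μ, column index A):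
`Ẽ^α_a = ẽ^α_a`, `Ẽ^2_2 = 1/√ε`, `Ẽ^2_a = −φ_ζ ẽ^ζ_a`, `Ẽ^α_2 = 0`. -/
noncomputable def Etmat (ε : ℝ) (e : Matrix (Fin 2) (Fin 2) ℝ) (φ : Fin 2 → ℝ) :
    Matrix (Fin 3) (Fin 3) ℝ :=
  !![e⁻¹ 0 0, e⁻¹ 0 1, 0;
     e⁻¹ 1 0, e⁻¹ 1 1, 0;
     -(φ 0 * e⁻¹ 0 0 + φ 1 * e⁻¹ 1 0), -(φ 0 * e⁻¹ 0 1 + φ 1 * e⁻¹ 1 1),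
       (Real.sqrt ε)⁻¹]

/-- The spin connection `[A_μ]^A_B = E^A_ν Ẽ^λ_B Γ^ν_{μλ} − Ẽ^λ_B ∂_μ E^A_λ`. -/
noncomputable def spinConn (ε : ℝ) (hm : (Fin 3 → ℝ) → Matrix (Fin 2) (Fin 2) ℝ)
    (φf : (Fin 3 → ℝ) → Fin 2 → ℝ) (em : (Fin 3 → ℝ) → Matrix (Fin 2) (Fin 2) ℝ)
    (μ A B : Fin 3) (x : Fin 3 → ℝ) : ℝ :=
  (∑ ν, ∑ lam, Emat ε (em x) (φf x) A ν * Etmat ε (em x) (φf x) lam B *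
      chris (fun y => KK ε (hm y) (φf y)) x ν μ lam)
    - ∑ lam, Etmat ε (em x) (φf x) lam B * pd μ (fun y => Emat ε (em y) (φf y) A lam) x


lemma pd_const (μ : Fin 3) (c : ℝ) (x : Fin 3 → ℝ) : pd μ (fun _ => c) x = 0 := by
  simp [pd]

lemma pd2_eq_zero (F : (Fin 3 → ℝ) → ℝ) (x : Fin 3 → ℝ)
    (hF : DifferentiableAt ℝ F x) (hind : ∀ y t, F (Function.update y 2 t) = F y) :
    pd 2 F x = 0 := by
  have hline : ∀ t : ℝ, x + t • (Pi.single (2 : Fin 3) (1:ℝ) : Fin 3 → ℝ) = Function.update x 2 (x 2 + t) := by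
    intro t; funext i
    by_cases hi : i = 2
    · subst hi; simp [Function.update_self, Pi.single]
    · simp [Function.update_of_ne hi, Pi.single, hi]
  have hcomp : (fun t : ℝ => F (x + t • (Pi.single (2:Fin 3) (1:ℝ) : Fin 3 → ℝ))) = fun _ => F x := by
    funext t; rw [hline, hind]
  have hc : HasDerivAt (fun t : ℝ => x + t • (Pi.single (2:Fin 3) (1:ℝ) : Fin 3 → ℝ))
      (Pi.single 2 1) 0 := by
    simpa using ((hasDerivAt_id (0:ℝ)).smul_const ((Pi.single (2:Fin 3) (1:ℝ) : Fin 3 → ℝ))).const_add x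
  have h1 : HasDerivAt (fun t : ℝ => F (x + t • (Pi.single (2:Fin 3) (1:ℝ) : Fin 3 → ℝ)))
      (fderiv ℝ F x (Pi.single 2 1)) 0 := by
    have hF' : HasFDerivAt F (fderiv ℝ F x) (x + (0:ℝ) • (Pi.single (2:Fin 3) (1:ℝ) : Fin 3 → ℝ)) := by
      simpa using hF.hasFDerivAt
    exact hF'.comp_hasDerivAt 0 hc
  rw [hcomp] at h1
  have h2 : HasDerivAt (fun _ : ℝ => F x) 0 (0:ℝ) := hasDerivAt_const _ _
  simpa [pd] using h1.unique h2

lemma chris_22 (ε : ℝ) (hm : (Fin 3 → ℝ) → Matrix (Fin 2) (Fin 2) ℝ)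
    (φf : (Fin 3 → ℝ) → Fin 2 → ℝ)
    (φsm : ∀ α, ContDiff ℝ (⊤ : ℕ∞) fun x => φf x α)
    (φind : ∀ x t, φf (Function.update x 2 t) = φf x)
    (x : Fin 3 → ℝ) (ν : Fin 3) :
    chris (fun y => KK ε (hm y) (φf y)) x ν 2 2 = 0 := by
  have e0 : (fun y => KK ε (hm y) (φf y) 0 2) = fun y => ε * φf y 0 := by
    funext y; simp [KK]
  have e1 : (fun y => KK ε (hm y) (φf y) 1 2) = fun y => ε * φf y 1 := by
    funext y; simp [KK]
  have e2 : (fun y => KK ε (hm y) (φf y) 2 2) = fun _ => ε := by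
    funext y; simp [KK]
  have h0 : pd 2 (fun y => KK ε (hm y) (φf y) 0 2) x = 0 := by
    rw [e0]
    exact pd2_eq_zero _ x (((φsm 0).differentiable (by simp) x).const_mul ε)
      (fun y t => by simp [φind y t])
  have h1 : pd 2 (fun y => KK ε (hm y) (φf y) 1 2) x = 0 := by
    rw [e1]
    exact pd2_eq_zero _ x (((φsm 1).differentiable (by simp) x).const_mul ε)
      (fun y t => by simp [φind y t])
  have h2 : ∀ ρ : Fin 3, pd ρ (fun y => KK ε (hm y) (φf y) 2 2) x = 0 := by
    intro ρ; rw [e2]; exact pd_const ρ ε x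
  unfold chris
  rw [Fin.sum_univ_three]
  rw [h0, h1, h2 0, h2 1, h2 2]
  ring

/-- the fiber-direction spin connection components vanish:
[A_2]^a_2 = 0 for a ∈ {0,1}. -/
theorem stmt_16
    (ε : ℝ) (hε : 0 < ε)
    (hm : (Fin 3 → ℝ) → Matrix (Fin 2) (Fin 2) ℝ) (φf : (Fin 3 → ℝ) → Fin 2 → ℝ)
    (hsm : ∀ α β, ContDiff ℝ (⊤ : ℕ∞) fun x => hm x α β)
    (φsm : ∀ α, ContDiff ℝ (⊤ : ℕ∞) fun x => φf x α)
    (hinv : ∀ x, IsUnit (hm x).det)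
    (hind : ∀ x t, hm (Function.update x 2 t) = hm x)
    (φind : ∀ x t, φf (Function.update x 2 t) = φf x)
    (em : (Fin 3 → ℝ) → Matrix (Fin 2) (Fin 2) ℝ)
    (esm : ∀ a α, ContDiff ℝ (⊤ : ℕ∞) fun x => em x a α)
    (einv : ∀ x, IsUnit (em x).det)
    (hZwei : ∀ x, (em x)ᵀ * em x = hm x) :
    ∀ (x : Fin 3 → ℝ) (a : Fin 2),
      spinConn ε hm φf em 2 a.castSucc 2 x = 0 := by
  intro x a
  unfold spinConn
  rw [Fin.sum_univ_three]
  simp only [Fin.sum_univ_three]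
  have hE2 : Emat ε (em x) (φf x) a.castSucc 2 = 0 := by
    fin_cases a <;> simp [Emat]
  have hEt0 : Etmat ε (em x) (φf x) 0 2 = 0 := by simp [Etmat]
  have hEt1 : Etmat ε (em x) (φf x) 1 2 = 0 := by simp [Etmat]
  have hpd : ∀ lam : Fin 3, pd 2 (fun y => Emat ε (em y) (φf y) a.castSucc lam) x
      = pd 2 (fun y => Emat ε (em y) (φf y) a.castSucc lam) x := fun _ => rfl
  have hpd2 : pd 2 (fun y => Emat ε (em y) (φf y) a.castSucc 2) x = 0 := by
    have : (fun y => Emat ε (em y) (φf y) a.castSucc 2) = fun _ => (0:ℝ) := by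
      funext y; fin_cases a <;> simp [Emat]
    rw [this]; exact pd_const 2 0 x
  rw [hEt0, hEt1, hpd2, hE2,
    chris_22 ε hm φf φsm φind x 0, chris_22 ε hm φf φsm φind x 1,
    chris_22 ε hm φf φsm φind x 2]
  ring
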